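/- One has I_3(R₁,R₂) ∼ (R₁R₂)² log(R₁R₂) / 4 as R₁R₂ → ∞; that is, for every ε > 0 there exists T > 1 such that for all R₁, R₂ > 0 with R₁R₂ ≥ T, |4 · I_3(R₁,R₂) / ((R₁R₂)² log(R₁R₂)) − 1| < ε. -/

import Mathlib

open MeasureTheory Real

/-- The volume integral `I_N(R₁,R₂)` over ordered tuples `R₁ > σ₁ > ⋯ > σ_N > 1/R₂`
of `∏ σ_l^{-N} ∏_{j<k} (σ_j² - σ_k²)`. -/
noncomputable def volI (N : ℕ) (R₁ R₂ : ℝ) : ℝ :=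
  ∫ σ in {σ : Fin N → ℝ | (∀ i, 1 / R₂ < σ i ∧ σ i < R₁) ∧
      ∀ i j : Fin N, i < j → σ j < σ i},
    (∏ l, ((σ l) ^ N)⁻¹) * ∏ j, ∏ k ∈ Finset.Ioi j, ((σ j) ^ 2 - (σ k) ^ 2)

namespace Stmt3Aux


noncomputable def f (x y z : ℝ) : ℝ :=
  (x ^ 3)⁻¹ * (y ^ 3)⁻¹ * (z ^ 3)⁻¹ * (x ^ 2 - y ^ 2) * (x ^ 2 - z ^ 2) * (y ^ 2 - z ^ 2)

noncomputable def Φ₁ (x y a z : ℝ) : ℝ :=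
  (x ^ 3)⁻¹ * (y ^ 3)⁻¹ * (x ^ 2 - y ^ 2) *
    (-(x ^ 2 * y ^ 2) * (z ^ 2)⁻¹ / 2 - (x ^ 2 + y ^ 2) * Real.log z + z ^ 2 / 2)

noncomputable def Φ₂ (x a y : ℝ) : ℝ :=
  (x ^ 3)⁻¹ *
    (-(y ^ 2) / 2 + y ^ 2 * Real.log y / 2 - Real.log a * y ^ 2 / 2
      + a ^ 2 * Real.log y / 2 - x ^ 2 * y ^ 2 / (4 * a ^ 2) + x ^ 2 * Real.log y
      + x ^ 2 * a ^ 2 * (y ^ 2)⁻¹ / 4 + x ^ 4 * Real.log y / (2 * a ^ 2)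
      + x ^ 4 * (y ^ 2)⁻¹ / 2 + x ^ 4 * Real.log y * (y ^ 2)⁻¹ / 2
      - x ^ 4 * Real.log a * (y ^ 2)⁻¹ / 2)

noncomputable def Φ₃ (a x : ℝ) : ℝ :=
  -(a ^ 2) * (x ^ 2)⁻¹ / 2 - a ^ 2 * (x ^ 2)⁻¹ * Real.log x / 4
    + a ^ 2 * (x ^ 2)⁻¹ * Real.log a / 4 + (Real.log x) ^ 2
    - 2 * Real.log a * Real.log x - x ^ 2 / (2 * a ^ 2)
    + x ^ 2 * Real.log x / (4 * a ^ 2) - x ^ 2 * Real.log a / (4 * a ^ 2)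

noncomputable def F (x : ℝ) : ℝ :=
  x ^ 2 * Real.log x / 4 - x ^ 2 / 2 + (Real.log x) ^ 2 + 1
    - (x ^ 2)⁻¹ / 2 - (x ^ 2)⁻¹ * Real.log x / 4

lemma hasDerivAt_Φ₁ (x y a z : ℝ) (hx : x ≠ 0) (hy : y ≠ 0) (hz : z ≠ 0) :
    HasDerivAt (Φ₁ x y a) (f x y z) z := by
  have h1 := (hasDerivAt_pow 2 z).inv (pow_ne_zero 2 hz)
  have h2 := ((((h1.const_mul (-(x ^ 2 * y ^ 2))).div_const 2).sub
      ((Real.hasDerivAt_log hz).const_mul (x ^ 2 + y ^ 2))).add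
      ((hasDerivAt_pow 2 z).div_const 2)).const_mul
      ((x ^ 3)⁻¹ * (y ^ 3)⁻¹ * (x ^ 2 - y ^ 2))
  have h3 : HasDerivAt (Φ₁ x y a) _ z := h2
  exact h3.congr_deriv (by unfold f; field_simp; ring)

lemma hasDerivAt_Φ₂ (x a : ℝ) (hx : x ≠ 0) (ha : 0 < a) {y : ℝ} (hy : 0 < y) :
    HasDerivAt (Φ₂ x a) (Φ₁ x y a y - Φ₁ x y a a) y := by
  have hy0 : y ≠ 0 := hy.ne'
  have hL := Real.hasDerivAt_log hy0
  have hinv := (hasDerivAt_pow 2 y).inv (pow_ne_zero 2 hy0)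
  have hp := hasDerivAt_pow 2 y
  have h2 := (((((((((((hp.neg.div_const 2).add
      ((hp.mul hL).div_const 2)).sub
      ((hp.const_mul (Real.log a)).div_const 2)).add
      ((hL.const_mul (a ^ 2)).div_const 2)).sub
      ((hp.const_mul (x ^ 2)).div_const (4 * a ^ 2))).add
      (hL.const_mul (x ^ 2))).add
      ((hinv.const_mul (x ^ 2 * a ^ 2)).div_const 4)).add
      ((hL.const_mul (x ^ 4)).div_const (2 * a ^ 2))).add
      ((hinv.const_mul (x ^ 4)).div_const 2)).add
      (((hL.const_mul (x ^ 4)).mul hinv).div_const 2)).sub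
      ((hinv.const_mul (x ^ 4 * Real.log a)).div_const 2)).const_mul (x ^ 3)⁻¹
  have h3 : HasDerivAt (Φ₂ x a) _ y := h2
  exact h3.congr_deriv (by unfold Φ₁; simp only [Pi.inv_apply]; field_simp; ring)

lemma hasDerivAt_Φ₃ (a : ℝ) (ha : 0 < a) {x : ℝ} (hx : 0 < x) :
    HasDerivAt (Φ₃ a) (Φ₂ x a x - Φ₂ x a a) x := by
  have hx0 : x ≠ 0 := hx.ne'
  have hL := Real.hasDerivAt_log hx0
  have hinv := (hasDerivAt_pow 2 x).inv (pow_ne_zero 2 hx0)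
  have hp := hasDerivAt_pow 2 x
  have h2 := ((((((((hinv.const_mul (-(a ^ 2))).div_const 2).sub
      (((hinv.const_mul (a ^ 2)).mul hL).div_const 4)).add
      (((hinv.const_mul (a ^ 2)).mul_const (Real.log a)).div_const 4)).add
      (hL.pow 2)).sub
      (hL.const_mul (2 * Real.log a))).sub
      (hp.div_const (2 * a ^ 2))).add
      ((hp.mul hL).div_const (4 * a ^ 2))).sub
      ((hp.mul_const (Real.log a)).div_const (4 * a ^ 2))
  have h3 : HasDerivAt (Φ₃ a) _ x := h2
  exact h3.congr_deriv (by unfold Φ₂; simp only [Pi.inv_apply]; field_simp; ring)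

lemma step3 (a b : ℝ) (ha : 0 < a) (hab : a < b) :
    Φ₃ a b - Φ₃ a a = F (b / a) := by
  have hb : 0 < b := ha.trans hab
  unfold Φ₃ F
  rw [Real.log_div hb.ne' ha.ne']
  field_simp
  ring

lemma tendsto_F : Filter.Tendsto (fun x : ℝ => 4 * F x / (x ^ 2 * Real.log x))
    Filter.atTop (nhds 1) := by
  have hL : Filter.Tendsto (fun x : ℝ => (Real.log x)⁻¹) Filter.atTop (nhds 0) :=
    Real.tendsto_log_atTop.inv_tendsto_atTop
  have hLx : Filter.Tendsto (fun x : ℝ => Real.log x / x) Filter.atTop (nhds 0) :=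
    Real.isLittleO_log_id_atTop.tendsto_div_nhds_zero
  have hxi : Filter.Tendsto (fun x : ℝ => x⁻¹) Filter.atTop (nhds 0) :=
    tendsto_inv_atTop_zero
  have h : Filter.Tendsto (fun x : ℝ =>
      1 - 2 * (Real.log x)⁻¹ + 4 * (Real.log x / x) * x⁻¹
        + 4 * (x⁻¹ * x⁻¹ * (Real.log x)⁻¹)
        - 2 * (x⁻¹ * x⁻¹ * (x⁻¹ * x⁻¹ * (Real.log x)⁻¹))
        - x⁻¹ * x⁻¹ * (x⁻¹ * x⁻¹)) Filter.atTop (nhds 1) := by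
    have t1 : Filter.Tendsto (fun x : ℝ => (1:ℝ)) Filter.atTop (nhds 1) :=
      tendsto_const_nhds
    have := ((((t1.sub (hL.const_mul 2)).add ((hLx.const_mul 4).mul hxi)).add
        ((hxi.mul hxi).mul hL |>.const_mul 4)).sub
        ((hxi.mul hxi).mul ((hxi.mul hxi).mul hL) |>.const_mul 2)).sub
        ((hxi.mul hxi).mul (hxi.mul hxi))
    simpa using this
  refine h.congr' ?_
  filter_upwards [Filter.eventually_ge_atTop 2] with x hx
  have hx0 : (0:ℝ) < x := by linarith
  have hlog : 0 < Real.log x := Real.log_pos (by linarith)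
  unfold F
  field_simp
  ring

lemma step2 (a b : ℝ) (ha : 0 < a) (hab : a < b) :
    (∫ x in Set.Ioo a b, ∫ y in Set.Ioo a x, ∫ z in Set.Ioo a y, f x y z)
      = Φ₃ a b - Φ₃ a a := by
  have key : ∀ x ∈ Set.Ioo a b, (∫ y in Set.Ioo a x, ∫ z in Set.Ioo a y, f x y z)
      = Φ₂ x a x - Φ₂ x a a := by
    intro x hx
    have hx0 : 0 < x := lt_trans ha hx.1
    have inner : ∀ y ∈ Set.Ioo a x,
        (∫ z in Set.Ioo a y, f x y z) = Φ₁ x y a y - Φ₁ x y a a := by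
      intro y hy
      have hy0 : 0 < y := lt_trans ha hy.1
      rw [← MeasureTheory.integral_Ioc_eq_integral_Ioo,
        ← intervalIntegral.integral_of_le hy.1.le]
      refine intervalIntegral.integral_eq_sub_of_hasDerivAt (f := Φ₁ x y a) ?_ ?_
      · intro t ht
        rw [Set.uIcc_of_le hy.1.le] at ht
        exact hasDerivAt_Φ₁ x y a t hx0.ne' hy0.ne' (lt_of_lt_of_le ha ht.1).ne'
      · apply ContinuousOn.intervalIntegrable
        have hne : ∀ t ∈ Set.uIcc a y, t ≠ 0 := by
          intro t ht
          rw [Set.uIcc_of_le hy.1.le] at ht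
          exact (lt_of_lt_of_le ha ht.1).ne'
        unfold f
        fun_prop (disch := first
          | (intro t ht; exact pow_ne_zero _ (hne t ht))
          | exact pow_ne_zero _ hx0.ne'
          | exact pow_ne_zero _ hy0.ne')
    rw [MeasureTheory.setIntegral_congr_fun measurableSet_Ioo inner,
      ← MeasureTheory.integral_Ioc_eq_integral_Ioo,
      ← intervalIntegral.integral_of_le hx.1.le]
    refine intervalIntegral.integral_eq_sub_of_hasDerivAt (f := Φ₂ x a) ?_ ?_
    · intro t ht
      rw [Set.uIcc_of_le hx.1.le] at ht
      exact hasDerivAt_Φ₂ x a hx0.ne' ha (lt_of_lt_of_le ha ht.1)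
    · apply ContinuousOn.intervalIntegrable
      have hne : ∀ t ∈ Set.uIcc a x, t ≠ 0 := by
        intro t ht
        rw [Set.uIcc_of_le hx.1.le] at ht
        exact (lt_of_lt_of_le ha ht.1).ne'
      unfold Φ₁
      fun_prop (disch := first
        | (intro t ht; exact pow_ne_zero _ (hne t ht))
        | (intro t ht; exact hne t ht)
        | exact pow_ne_zero _ hx0.ne'
        | exact ha.ne'
        | exact pow_ne_zero _ ha.ne')
  rw [MeasureTheory.setIntegral_congr_fun measurableSet_Ioo key,
    ← MeasureTheory.integral_Ioc_eq_integral_Ioo,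
    ← intervalIntegral.integral_of_le hab.le]
  refine intervalIntegral.integral_eq_sub_of_hasDerivAt (f := Φ₃ a) ?_ ?_
  · intro t ht
    rw [Set.uIcc_of_le hab.le] at ht
    exact hasDerivAt_Φ₃ a ha (lt_of_lt_of_le ha ht.1)
  · apply ContinuousOn.intervalIntegrable
    have hne : ∀ t ∈ Set.uIcc a b, t ≠ 0 := by
      intro t ht
      rw [Set.uIcc_of_le hab.le] at ht
      exact (lt_of_lt_of_le ha ht.1).ne'
    unfold Φ₂
    fun_prop (disch := first
      | (intro t ht; exact pow_ne_zero _ (hne t ht))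
      | (intro t ht; exact hne t ht)
      | exact ha.ne'
      | exact pow_ne_zero _ ha.ne'
      | (exact (by positivity : (0:ℝ) < 4 * a ^ 2).ne')
      | (exact (by positivity : (0:ℝ) < 2 * a ^ 2).ne'))


noncomputable def Emeas : (Fin 3 → ℝ) ≃ᵐ ℝ × ℝ × ℝ :=
  (MeasurableEquiv.piFinSuccAbove (fun _ : Fin 3 => ℝ) 0).trans
    ((MeasurableEquiv.refl ℝ).prodCongr (MeasurableEquiv.finTwoArrow))

lemma Emeas_mp : MeasurePreserving Emeas := by
  have h1 := MeasureTheory.volume_preserving_piFinSuccAbove (fun _ : Fin 3 => ℝ) 0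
  have h2 := (MeasurePreserving.id (volume : Measure ℝ)).prod
    (volume_preserving_finTwoArrow ℝ)
  exact h2.comp h1

lemma Emeas_symm (p : ℝ × ℝ × ℝ) : ∀ i, Emeas.symm p i = ![p.1, p.2.1, p.2.2] i := by
  intro i
  fin_cases i <;> rfl


lemma sliceInt {β : Type*} [MeasureSpace β] [SigmaFinite (volume : Measure β)]
    {U : Set ℝ} (hU : MeasurableSet U) {V : ℝ → Set β}
    (hV : ∀ x ∈ U, MeasurableSet (V x)) {S : Set (ℝ × β)}
    (hS : S = {p | p.1 ∈ U ∧ p.2 ∈ V p.1}) (hSm : MeasurableSet S)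
    (g : ℝ × β → ℝ) (hg : IntegrableOn g S) :
    ∫ p in S, g p = ∫ x in U, ∫ y in V x, g (x, y) := by
  have hg' : Integrable (S.indicator g) (volume.prod volume) := by
    rw [← Measure.volume_eq_prod]
    exact (integrable_indicator_iff hSm).2 hg
  rw [← integral_indicator hSm, Measure.volume_eq_prod,
    MeasureTheory.integral_prod _ hg', ← integral_indicator hU]
  congr 1
  funext x
  by_cases hx : x ∈ U
  · rw [Set.indicator_of_mem hx, ← integral_indicator (hV x hx)]
    congr 1
    funext q
    by_cases hq : q ∈ V x
    · rw [Set.indicator_of_mem hq,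
        Set.indicator_of_mem (show (x, q) ∈ S by rw [hS]; exact ⟨hx, hq⟩)]
    · rw [Set.indicator_of_notMem hq,
        Set.indicator_of_notMem (show (x, q) ∉ S by rw [hS]; exact fun h => hq h.2)]
  · rw [Set.indicator_of_notMem hx]
    have : ∀ q : β, S.indicator g (x, q) = 0 := fun q =>
      Set.indicator_of_notMem (by rw [hS]; exact fun h => hx h.1) g
    simp [this]

set_option maxHeartbeats 2000000 in
lemma step1 (a b : ℝ) (ha : 0 < a) (hab : a < b) :
    (∫ σ in {σ : Fin 3 → ℝ | (∀ i, a < σ i ∧ σ i < b) ∧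
        ∀ i j : Fin 3, i < j → σ j < σ i},
      (∏ l, ((σ l) ^ 3)⁻¹) * ∏ j, ∏ k ∈ Finset.Ioi j, ((σ j) ^ 2 - (σ k) ^ 2))
      = ∫ x in Set.Ioo a b, ∫ y in Set.Ioo a x, ∫ z in Set.Ioo a y, f x y z := by
  have hg : ∀ σ : Fin 3 → ℝ,
      (∏ l, ((σ l) ^ 3)⁻¹) * ∏ j, ∏ k ∈ Finset.Ioi j, ((σ j) ^ 2 - (σ k) ^ 2)
        = f (σ 0) (σ 1) (σ 2) := by
    intro σ
    rw [Fin.prod_univ_three, Fin.prod_univ_three,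
      show (Finset.Ioi (0 : Fin 3)) = {1, 2} by decide,
      show (Finset.Ioi (1 : Fin 3)) = {2} by decide,
      show (Finset.Ioi (2 : Fin 3)) = ∅ by decide]
    rw [Finset.prod_pair (show (1:Fin 3) ≠ 2 by decide)]
    simp only [Finset.prod_singleton, Finset.prod_empty, f]
    ring
  have hset : {σ : Fin 3 → ℝ | (∀ i, a < σ i ∧ σ i < b) ∧
      ∀ i j : Fin 3, i < j → σ j < σ i}
      = {σ : Fin 3 → ℝ | (a < σ 2 ∧ σ 2 < σ 1) ∧ σ 1 < σ 0 ∧ σ 0 < b} := by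
    ext σ
    constructor
    · rintro ⟨h1, h2⟩
      exact ⟨⟨(h1 2).1, h2 1 2 (by decide)⟩, h2 0 1 (by decide), (h1 0).2⟩
    · rintro ⟨⟨h1, h2⟩, h3, h4⟩
      refine ⟨fun i => ?_, fun i j hij => ?_⟩
      · fin_cases i
        · exact ⟨lt_trans (lt_trans h1 h2) h3, h4⟩
        · exact ⟨lt_trans h1 h2, lt_trans h3 h4⟩
        · exact ⟨h1, lt_trans h2 (lt_trans h3 h4)⟩
      · fin_cases i <;> fin_cases j <;>
          first
            | exact absurd hij (by decide)
            | exact h3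
            | exact h2
            | exact lt_trans h2 h3
  simp only [hg, hset]
  rw [← Emeas_mp.symm Emeas |>.setIntegral_preimage_emb
    Emeas.symm.measurableEmbedding (fun σ => f (σ 0) (σ 1) (σ 2)) _]
  have hpre : ⇑Emeas.symm ⁻¹' {σ : Fin 3 → ℝ | (a < σ 2 ∧ σ 2 < σ 1) ∧ σ 1 < σ 0 ∧ σ 0 < b}
      = {p : ℝ × ℝ × ℝ | p.1 ∈ Set.Ioo a b ∧
          p.2 ∈ {q : ℝ × ℝ | q.1 ∈ Set.Ioo a p.1 ∧ q.2 ∈ Set.Ioo a q.1}} := by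
    ext p
    simp only [Set.mem_preimage, Set.mem_setOf_eq, Emeas_symm, Set.mem_Ioo]
    simp only [Matrix.cons_val_zero, Matrix.cons_val_one, Matrix.head_cons,
      Matrix.cons_val_two, Matrix.tail_cons]
    constructor
    · rintro ⟨⟨h1, h2⟩, h3, h4⟩
      exact ⟨⟨by linarith, h4⟩, ⟨by linarith, h3⟩, h1, h2⟩
    · rintro ⟨⟨h1, h2⟩, ⟨h3, h4⟩, h5, h6⟩
      exact ⟨⟨h5, h6⟩, h4, h2⟩
  have hint : ∀ p : ℝ × ℝ × ℝ, f (Emeas.symm p 0) (Emeas.symm p 1) (Emeas.symm p 2)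
      = f p.1 p.2.1 p.2.2 := by
    intro p
    simp only [Emeas_symm, Matrix.cons_val_zero, Matrix.cons_val_one, Matrix.head_cons,
      Matrix.cons_val_two, Matrix.tail_cons]
  simp only [hint]
  rw [hpre]
  have hVm : ∀ x : ℝ, MeasurableSet {q : ℝ × ℝ | q.1 ∈ Set.Ioo a x ∧ q.2 ∈ Set.Ioo a q.1} := by
    intro x
    apply IsOpen.measurableSet
    exact ((isOpen_lt continuous_const continuous_fst).and
        (isOpen_lt continuous_fst continuous_const)).and
      ((isOpen_lt continuous_const continuous_snd).and
        (isOpen_lt continuous_snd continuous_fst))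
  have hS3m : MeasurableSet {p : ℝ × ℝ × ℝ | p.1 ∈ Set.Ioo a b ∧
      p.2 ∈ {q : ℝ × ℝ | q.1 ∈ Set.Ioo a p.1 ∧ q.2 ∈ Set.Ioo a q.1}} := by
    apply IsOpen.measurableSet
    exact ((isOpen_lt continuous_const continuous_fst).and
        (isOpen_lt continuous_fst continuous_const)).and
      (((isOpen_lt continuous_const (continuous_fst.comp continuous_snd)).and
        (isOpen_lt (continuous_fst.comp continuous_snd) continuous_fst)).and
      ((isOpen_lt continuous_const (continuous_snd.comp continuous_snd)).and
        (isOpen_lt (continuous_snd.comp continuous_snd)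
          (continuous_fst.comp continuous_snd))))
  have hIS : IntegrableOn (fun p : ℝ × ℝ × ℝ => f p.1 p.2.1 p.2.2)
      {p : ℝ × ℝ × ℝ | p.1 ∈ Set.Ioo a b ∧
        p.2 ∈ {q : ℝ × ℝ | q.1 ∈ Set.Ioo a p.1 ∧ q.2 ∈ Set.Ioo a q.1}} := by
    have hK : IsCompact (Set.Icc a b ×ˢ Set.Icc a b ×ˢ Set.Icc a b) :=
      isCompact_Icc.prod (isCompact_Icc.prod isCompact_Icc)
    have hcont : ContinuousOn (fun p : ℝ × ℝ × ℝ => f p.1 p.2.1 p.2.2)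
        (Set.Icc a b ×ˢ Set.Icc a b ×ˢ Set.Icc a b) := by
      unfold f
      fun_prop (disch := rintro ⟨x, y, z⟩ ⟨h1, h2, h3⟩; first
        | exact pow_ne_zero _ (lt_of_lt_of_le ha h1.1).ne'
        | exact pow_ne_zero _ (lt_of_lt_of_le ha h2.1).ne'
        | exact pow_ne_zero _ (lt_of_lt_of_le ha h3.1).ne')
    refine (hcont.integrableOn_compact hK).mono_set ?_
    rintro ⟨x, y, z⟩ ⟨⟨hx1, hx2⟩, ⟨hy1, hy2⟩, hz1, hz2⟩
    exact ⟨⟨le_of_lt hx1, le_of_lt hx2⟩, ⟨le_of_lt hy1, le_of_lt (lt_trans hy2 hx2)⟩,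
      le_of_lt hz1, le_of_lt (lt_trans hz2 (lt_trans hy2 hx2))⟩
  rw [sliceInt measurableSet_Ioo (fun x _ => hVm x) rfl hS3m _ hIS]
  apply MeasureTheory.setIntegral_congr_fun measurableSet_Ioo
  intro x hx
  have hIx : IntegrableOn (fun q : ℝ × ℝ => f x q.1 q.2)
      {q : ℝ × ℝ | q.1 ∈ Set.Ioo a x ∧ q.2 ∈ Set.Ioo a q.1} := by
    have hK : IsCompact (Set.Icc a x ×ˢ Set.Icc a x) := isCompact_Icc.prod isCompact_Icc
    have hcont : ContinuousOn (fun q : ℝ × ℝ => f x q.1 q.2)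
        (Set.Icc a x ×ˢ Set.Icc a x) := by
      unfold f
      fun_prop (disch := rintro ⟨y, z⟩ ⟨h1, h2⟩; first
        | exact pow_ne_zero _ (lt_trans ha hx.1).ne'
        | exact pow_ne_zero _ (lt_of_lt_of_le ha h1.1).ne'
        | exact pow_ne_zero _ (lt_of_lt_of_le ha h2.1).ne')
    refine (hcont.integrableOn_compact hK).mono_set ?_
    rintro ⟨y, z⟩ ⟨⟨hy1, hy2⟩, hz1, hz2⟩
    exact ⟨⟨le_of_lt hy1, le_of_lt hy2⟩, le_of_lt hz1, le_of_lt (lt_trans hz2 hy2)⟩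
  show (∫ q in {q : ℝ × ℝ | q.1 ∈ Set.Ioo a x ∧ q.2 ∈ Set.Ioo a q.1}, f x q.1 q.2)
      = ∫ y in Set.Ioo a x, ∫ z in Set.Ioo a y, f x y z
  exact sliceInt (U := Set.Ioo a x) (V := fun y => Set.Ioo a y) measurableSet_Ioo
    (fun y _ => measurableSet_Ioo) rfl (hVm x) (fun q => f x q.1 q.2) hIx

lemma volI_eq (R₁ R₂ : ℝ) (h₁ : 0 < R₁) (h₂ : 0 < R₂) (h : 1 < R₁ * R₂) :
    volI 3 R₁ R₂ = F (R₁ * R₂) := by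
  have ha : (0:ℝ) < 1 / R₂ := by positivity
  have hab : 1 / R₂ < R₁ := by
    rw [div_lt_iff₀ h₂]; nlinarith
  have := (step1 (1 / R₂) R₁ ha hab).trans
    ((step2 (1 / R₂) R₁ ha hab).trans (step3 (1 / R₂) R₁ ha hab))
  rw [volI, this]
  congr 1
  field_simp

end Stmt3Aux

theorem stmt3 :
    ∀ ε : ℝ, 0 < ε → ∃ T : ℝ, 1 < T ∧
      ∀ R₁ R₂ : ℝ, 0 < R₁ → 0 < R₂ → T ≤ R₁ * R₂ →
        |4 * volI 3 R₁ R₂ / ((R₁ * R₂) ^ 2 * Real.log (R₁ * R₂)) - 1| < ε := by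
  intro ε hε
  have h := Stmt3Aux.tendsto_F
  rw [Metric.tendsto_atTop] at h
  obtain ⟨N, hN⟩ := h ε hε
  refine ⟨max N 2, by simp, ?_⟩
  intro R₁ R₂ hR₁ hR₂ hT
  have hx1 : (1:ℝ) < R₁ * R₂ := lt_of_lt_of_le (by norm_num) (le_trans (le_max_right N 2) hT)
  rw [Stmt3Aux.volI_eq R₁ R₂ hR₁ hR₂ hx1]
  have := hN (R₁ * R₂) (le_trans (le_max_left N 2) hT)
  rwa [Real.dist_eq] at this
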